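/- For every 0 < p < ∞ there exists a constant C = C_{n,m,p} such that for all a, b ≥ 1 and all f ∈ L^1(R^{n+m}): ∫_{R^n×R^m} (M^*_{φ,a,b}f)^p dx dy ≤ C (1+a)^n (1+b)^m ∫_{R^n×R^m} (M^*_φ f)^p dx dy. -/

import Mathlib

open MeasureTheory ENNReal Metric Set

noncomputable section

abbrev Ed (n : ℕ) : Type := EuclideanSpace ℝ (Fin n)

/-- `(φ_{t,s} * f)(x,y)`, convolution on ℝ^{n+m} of the member `φ t s` of the family with `f`. -/
def conv2 (n m : ℕ) (φ : ℝ → ℝ → Ed n × Ed m → ℝ) (f : Ed n × Ed m → ℝ)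
    (t s : ℝ) (x : Ed n) (y : Ed m) : ℝ :=
  ∫ q : Ed n × Ed m, φ t s (x - q.1, y - q.2) * f q

/-- Radial maximal function `M⁺_φ f (x,y) = sup_{t,s>0} |φ_{t,s} * f(x,y)|`. -/
def Mplus (n m : ℕ) (φ : ℝ → ℝ → Ed n × Ed m → ℝ) (f : Ed n × Ed m → ℝ)
    (x : Ed n) (y : Ed m) : ℝ≥0∞ :=
  ⨆ (t : ℝ) (_ : 0 < t) (s : ℝ) (_ : 0 < s), ENNReal.ofReal |conv2 n m φ f t s x y|

/-- Non-tangential maximal function of aperture `(a,b)`: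
`sup |φ_{t,s} * f(x₁,y₁)|` over `|x−x₁| ≤ a t`, `|y−y₁| ≤ b (t+s)`. -/
def MstarAp (n m : ℕ) (φ : ℝ → ℝ → Ed n × Ed m → ℝ) (f : Ed n × Ed m → ℝ)
    (a b : ℝ) (x : Ed n) (y : Ed m) : ℝ≥0∞ :=
  ⨆ (x₁ : Ed n) (y₁ : Ed m) (t : ℝ) (s : ℝ) (_ : 0 < t) (_ : 0 < s)
    (_ : ‖x - x₁‖ ≤ a * t) (_ : ‖y - y₁‖ ≤ b * (t + s)),
    ENNReal.ofReal |conv2 n m φ f t s x₁ y₁|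

/-- Non-tangential maximal function `M^*_φ` (aperture `(1,1)`). -/
def Mstar (n m : ℕ) (φ : ℝ → ℝ → Ed n × Ed m → ℝ) (f : Ed n × Ed m → ℝ)
    (x : Ed n) (y : Ed m) : ℝ≥0∞ :=
  MstarAp n m φ f 1 1 x y

/-- Tangential maximal function
`M^{**}_N f(x,y) = sup_{u,v,t,s>0} |φ_{t,s}*f(x−u,y−v)| (1+|u|/t)^{−N} (1+|v|/(t+s))^{−N}`. -/
def Mtan (n m : ℕ) (φ : ℝ → ℝ → Ed n × Ed m → ℝ) (f : Ed n × Ed m → ℝ)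
    (N : ℝ) (x : Ed n) (y : Ed m) : ℝ≥0∞ :=
  ⨆ (u : Ed n) (v : Ed m) (t : ℝ) (s : ℝ) (_ : 0 < t) (_ : 0 < s),
    ENNReal.ofReal (|conv2 n m φ f t s (x - u) (y - v)|
      * (1 + ‖u‖ / t) ^ (-N) * (1 + ‖v‖ / (t + s)) ^ (-N))

section AuxProof

section Helpers

variable {n m : ℕ} (φ : ℝ → ℝ → Ed n × Ed m → ℝ) (f : Ed n × Ed m → ℝ)

lemma le_MstarAp {a b : ℝ} (x x₁ : Ed n) (y y₁ : Ed m) {t s : ℝ} (ht : 0 < t) (hs : 0 < s)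
    (h1 : ‖x - x₁‖ ≤ a * t) (h2 : ‖y - y₁‖ ≤ b * (t + s)) :
    ENNReal.ofReal |conv2 n m φ f t s x₁ y₁| ≤ MstarAp n m φ f a b x y := by
  unfold MstarAp
  exact le_iSup_of_le x₁ <| le_iSup_of_le y₁ <| le_iSup_of_le t <| le_iSup_of_le s <|
    le_iSup_of_le ht <| le_iSup_of_le hs <| le_iSup_of_le h1 <| le_iSup_of_le h2 le_rfl

lemma MstarAp_witness {a b : ℝ} {x : Ed n} {y : Ed m} {lam : ℝ≥0∞}
    (h : lam < MstarAp n m φ f a b x y) :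
    ∃ x₁ y₁ t s, 0 < t ∧ 0 < s ∧ ‖x - x₁‖ ≤ a * t ∧ ‖y - y₁‖ ≤ b * (t + s) ∧
      lam < ENNReal.ofReal |conv2 n m φ f t s x₁ y₁| := by
  unfold MstarAp at h
  simp only [lt_iSup_iff] at h
  obtain ⟨x₁, y₁, t, s, ht, hs, h1, h2, hval⟩ := h
  exact ⟨x₁, y₁, t, s, ht, hs, h1, h2, hval⟩

/-- The index set of "good rectangles" at dyadic level `k`. -/
def Wset (k : ℤ) : Set ((Ed n × Ed m) × ℝ × ℝ) :=
  {w | 0 < w.2.1 ∧ 0 < w.2.2 ∧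
    ENNReal.ofReal ((2:ℝ) ^ k) < ENNReal.ofReal |conv2 n m φ f w.2.1 w.2.2 w.1.1 w.1.2|}

/-- Union of core rectangles at level `k`. -/
def OkS (k : ℤ) : Set (Ed n × Ed m) :=
  ⋃ w : Wset φ f k, ball w.1.1.1 w.1.2.1 ×ˢ ball w.1.1.2 (w.1.2.1 + w.1.2.2)

/-- Union of dilated rectangles at level `k`. -/
def VkS (a b : ℝ) (k : ℤ) : Set (Ed n × Ed m) :=
  ⋃ w : Wset φ f k,
    ball w.1.1.1 (2*a*w.1.2.1) ×ˢ ball w.1.1.2 (2*b*(w.1.2.1 + w.1.2.2))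

lemma OkS_open (k : ℤ) : IsOpen (OkS φ f k) :=
  isOpen_iUnion fun _ => isOpen_ball.prod isOpen_ball

lemma VkS_open (a b : ℝ) (k : ℤ) : IsOpen (VkS φ f a b k) :=
  isOpen_iUnion fun _ => isOpen_ball.prod isOpen_ball

lemma mem_Ok_lt_Mstar {k : ℤ} {q : Ed n × Ed m} (hq : q ∈ OkS φ f k) :
    ENNReal.ofReal ((2:ℝ) ^ k) < MstarAp n m φ f 1 1 q.1 q.2 := by
  obtain ⟨w, hw1⟩ := Set.mem_iUnion.1 hq
  obtain ⟨hq1, hq2⟩ := hw1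
  refine lt_of_lt_of_le w.2.2.2 ?_
  refine le_MstarAp φ f q.1 w.1.1.1 q.2 w.1.1.2 w.2.1 w.2.2.1 ?_ ?_
  · rw [one_mul, ← dist_eq_norm]
    exact (mem_ball.1 hq1).le
  · rw [one_mul, ← dist_eq_norm]
    exact (mem_ball.1 hq2).le

lemma Wset_antitone {j k : ℤ} (hjk : j ≤ k) : Wset φ f (n := n) (m := m) k ⊆ Wset φ f j := by
  intro w hw
  refine ⟨hw.1, hw.2.1, lt_of_le_of_lt ?_ hw.2.2⟩
  exact ENNReal.ofReal_le_ofReal (zpow_le_zpow_right₀ one_le_two hjk)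

lemma OkS_antitone {j k : ℤ} (hjk : j ≤ k) : OkS φ f (n := n) (m := m) k ⊆ OkS φ f j := by
  intro q hq
  obtain ⟨w, hw⟩ := Set.mem_iUnion.1 hq
  exact Set.mem_iUnion.2 ⟨⟨w.1, Wset_antitone φ f hjk w.2⟩, hw⟩

lemma mem_Vk {a b : ℝ} (ha : 1 ≤ a) (hb : 1 ≤ b) {k : ℤ} {q : Ed n × Ed m}
    (h : ENNReal.ofReal ((2:ℝ) ^ k) < MstarAp n m φ f a b q.1 q.2) :
    q ∈ VkS φ f a b k := by
  obtain ⟨x₁, y₁, t, s, ht, hs, h1, h2, hval⟩ := MstarAp_witness φ f h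
  refine Set.mem_iUnion.2 ⟨⟨((x₁, y₁), (t, s)), ⟨ht, hs, hval⟩⟩, ?_, ?_⟩
  · simp only [mem_ball, dist_eq_norm]
    calc ‖q.1 - x₁‖ ≤ a * t := h1
      _ < 2*a*t := by nlinarith
  · simp only [mem_ball, dist_eq_norm]
    calc ‖q.2 - y₁‖ ≤ b * (t + s) := h2
      _ < 2*b*(t + s) := by nlinarith

end Helpers

-- dyadic telescoping sum bound
lemma sum_d_le (p : ℝ) (hp : 0 < p) (F : Finset ℤ) (K : ℤ) (hF : ∀ k ∈ F, k ≤ K) :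
    ∑ k ∈ F, ((2:ℝ) ^ ((k:ℝ) * p) - (2:ℝ) ^ (((k:ℝ) - 1) * p)) ≤ (2:ℝ) ^ ((K:ℝ) * p) := by
  have hmono : StrictMono (fun k : ℝ => (2:ℝ) ^ (k * p)) := fun u v huv => by
    apply Real.rpow_lt_rpow_left_iff (by norm_num : (1:ℝ) < 2) |>.2
    exact mul_lt_mul_of_pos_right huv hp
  have hnn : ∀ k : ℤ, (0:ℝ) ≤ (2:ℝ) ^ ((k:ℝ) * p) - (2:ℝ) ^ (((k:ℝ) - 1) * p) := by
    intro k
    have := (hmono.le_iff_le (a := (k:ℝ) - 1) (b := (k:ℝ))).2 (by linarith)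
    simpa using sub_nonneg.2 this
  rcases F.eq_empty_or_nonempty with rfl | hFne
  · simpa using (Real.rpow_pos_of_pos two_pos _).le
  set j := F.min' hFne with hj
  have hsub : F ⊆ Finset.Icc j K := fun k hk =>
    Finset.mem_Icc.2 ⟨F.min'_le k hk, hF k hk⟩
  have h1 : ∑ k ∈ F, ((2:ℝ) ^ ((k:ℝ) * p) - (2:ℝ) ^ (((k:ℝ) - 1) * p)) ≤
      ∑ k ∈ Finset.Icc j K, ((2:ℝ) ^ ((k:ℝ) * p) - (2:ℝ) ^ (((k:ℝ) - 1) * p)) :=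
    Finset.sum_le_sum_of_subset_of_nonneg hsub (fun k _ _ => hnn k)
  have hjK : j ≤ K := hF j (F.min'_mem hFne)
  have h2 : ∀ d : ℕ, ∑ k ∈ Finset.Icc j (j + (d:ℤ)),
      ((2:ℝ) ^ ((k:ℝ) * p) - (2:ℝ) ^ (((k:ℝ) - 1) * p)) =
      (2:ℝ) ^ (((j + (d:ℤ) : ℤ):ℝ) * p) - (2:ℝ) ^ (((j:ℝ) - 1) * p) := by
    intro d
    induction d with
    | zero => simp [Finset.Icc_self]
    | succ d ih =>
        have hins : Finset.Icc j (j + ((d:ℤ)+1)) = insert (j + (d:ℤ) + 1) (Finset.Icc j (j + (d:ℤ))) :=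
          Finset.ext fun x => by
            simp only [Finset.mem_Icc, Finset.mem_insert]; omega
        push_cast
        rw [hins, Finset.sum_insert (by simp), ih]
        push_cast
        ring
  have h3 := h2 (K - j).toNat
  rw [show j + ((K - j).toNat : ℤ) = K by omega] at h3
  have h4 : (0:ℝ) < (2:ℝ) ^ (((j:ℝ) - 1) * p) := Real.rpow_pos_of_pos two_pos _
  linarith

/-- One-factor Vitali covering estimate. -/
lemma cover_lemma {k : ℕ} (hk : 1 ≤ k) {ι : Type} (c : ι → Ed k) (ρ : ι → ℝ)
    (hρ : ∀ i, 0 < ρ i) (S : Set (Ed k))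
    (hcore : ∀ i, closedBall (c i) (ρ i) ⊆ S) (κ : ℝ) (hκ : 1 ≤ κ) :
    volume (⋃ i, ball (c i) (κ * ρ i)) ≤ ENNReal.ofReal ((3 + 2*κ)^k) * volume S := by
  have hk3 : (0:ℝ) < (3 + 2*κ)^k := by positivity
  have hfr : Module.finrank ℝ (Ed k) = k := finrank_euclideanSpace_fin
  haveI : Nontrivial (Ed k) :=
    Module.nontrivial_of_finrank_pos (R := ℝ) (M := Ed k) (by rw [hfr]; omega)
  rcases eq_or_ne (volume S) ∞ with hStop | hSfin
  · rw [hStop, ENNReal.mul_top (by simp only [ne_eq, ENNReal.ofReal_eq_zero, not_le]; linarith)]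
    exact le_top
  set v := volume (ball (0 : Ed k) 1) with hv
  have hball01 : (0:ℝ≥0∞) < v := measure_ball_pos _ _ one_pos
  have hvfin : v ≠ ∞ := measure_ball_lt_top.ne
  have hmeasball : ∀ (x : Ed k) (r : ℝ), 0 ≤ r →
      volume (ball x r) = ENNReal.ofReal (r ^ k) * v := by
    intro x r hr
    have := Measure.addHaar_ball (volume : Measure (Ed k)) x hr
    rwa [hfr] at this
  -- radii are bounded
  have hradbound : ∃ R : ℝ, ∀ i, ρ i ≤ R := by
    set B := (volume S).toReal / v.toReal with hB
    refine ⟨max 1 B, fun i => ?_⟩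
    have h1 : ENNReal.ofReal (ρ i ^ k) * v ≤ volume S := by
      rw [← hmeasball (c i) (ρ i) (hρ i).le]
      exact le_trans (measure_mono ball_subset_closedBall) (measure_mono (hcore i))
    have h2 := ENNReal.toReal_mono hSfin h1
    rw [ENNReal.toReal_mul, ENNReal.toReal_ofReal (pow_pos (hρ i) k).le] at h2
    have hv0 : 0 < v.toReal := ENNReal.toReal_pos hball01.ne' hvfin
    have h3 : ρ i ^ k ≤ B := by
      rw [hB, le_div_iff₀ hv0]; exact h2
    rcases le_or_gt (ρ i) 1 with h | h
    · exact le_trans h (le_max_left _ _)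
    · exact le_trans ((le_self_pow₀ h.le (by omega)).trans h3) (le_max_right _ _)
  obtain ⟨R, hR⟩ := hradbound
  obtain ⟨u, -, hdisj, hcov⟩ :=
    Vitali.exists_disjoint_subfamily_covering_enlargement
      (fun i => closedBall (c i) (ρ i)) Set.univ ρ 2 one_lt_two
      (fun i _ => (hρ i).le) R (fun i _ => hR i)
      (fun i _ => (nonempty_closedBall.2 (hρ i).le))
  have hdisj' : Pairwise (Function.onFun Disjoint fun j : u => closedBall (c j.1) (ρ j.1)) := by
    intro j j' hjj'
    exact hdisj j.2 j'.2 (fun h => hjj' (Subtype.ext h))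
  -- u is countable
  haveI hucnt : Countable u := by
    have hcnt := MeasureTheory.Measure.countable_meas_pos_of_disjoint_iUnion
      (μ := (volume : Measure (Ed k)))
      (As := fun j : u => closedBall (c j.1) (ρ j.1)) (fun j => measurableSet_closedBall) hdisj'
    have heq : {j : u | 0 < volume (closedBall (c j.1) (ρ j.1))} = Set.univ := by
      ext j; simp only [Set.mem_setOf_eq, Set.mem_univ, iff_true]
      exact measure_closedBall_pos _ _ (hρ j.1)
    rw [heq] at hcnt
    exact Set.countable_univ_iff.1 hcnt
  -- covering by enlargements
  have hcov' : (⋃ i, ball (c i) (κ * ρ i)) ⊆ ⋃ j : u, ball (c j.1) ((3 + 2*κ) * ρ j.1) := by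
    refine Set.iUnion_subset fun i => ?_
    obtain ⟨j, hj, ⟨z, hz1, hz2⟩, hle⟩ := hcov i (Set.mem_univ i)
    refine Set.subset_iUnion_of_subset ⟨j, hj⟩ ?_
    intro w hw
    simp only [mem_ball] at hw ⊢
    rw [mem_closedBall] at hz1 hz2
    have h4 : dist w (c j) ≤ dist w (c i) + dist (c i) z + dist z (c j) :=
      dist_triangle4 _ _ _ _
    rw [dist_comm (c i) z] at h4
    have hρi := hρ i; have hρj := hρ j
    nlinarith [mul_le_mul_of_nonneg_left hle (by linarith : (0:ℝ) ≤ κ)]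
  calc volume (⋃ i, ball (c i) (κ * ρ i))
      ≤ volume (⋃ j : u, ball (c j.1) ((3 + 2*κ) * ρ j.1)) := measure_mono hcov'
    _ ≤ ∑' j : u, volume (ball (c j.1) ((3 + 2*κ) * ρ j.1)) := measure_iUnion_le _
    _ = ∑' j : u, ENNReal.ofReal ((3 + 2*κ)^k) * volume (closedBall (c j.1) (ρ j.1)) := by
        refine tsum_congr fun j => ?_
        rw [Measure.addHaar_closedBall_eq_addHaar_ball,
          hmeasball _ _ (by nlinarith [hρ j.1] : (0:ℝ) ≤ (3 + 2*κ) * ρ j.1), hmeasball _ _ (hρ j.1).le,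
          ← mul_assoc, ← ENNReal.ofReal_mul hk3.le, mul_pow]
    _ = ENNReal.ofReal ((3 + 2*κ)^k) * ∑' j : u, volume (closedBall (c j.1) (ρ j.1)) := by
        rw [ENNReal.tsum_mul_left]
    _ ≤ ENNReal.ofReal ((3 + 2*κ)^k) * volume S := by
        gcongr
        have hsub : (⋃ j : u, closedBall (c j.1) (ρ j.1)) ⊆ S :=
          Set.iUnion_subset fun j => hcore j.1
        rw [← measure_iUnion hdisj' (fun j => measurableSet_closedBall)]
        exact measure_mono hsub

/-- Two-parameter covering estimate. -/
lemma prod_cover {n m : ℕ} (hn : 1 ≤ n) (hm : 1 ≤ m) {ι : Type}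
    (cx : ι → Ed n) (cy : ι → Ed m) (ρx ρy : ι → ℝ)
    (hx : ∀ i, 0 < ρx i) (hy : ∀ i, 0 < ρy i) (a b : ℝ) (ha : 1 ≤ a) (hb : 1 ≤ b) :
    volume (⋃ i, ball (cx i) (2*a*ρx i) ×ˢ ball (cy i) (2*b*ρy i)) ≤
      ENNReal.ofReal (8^n * (1+a)^n * (8^m * (1+b)^m)) *
        volume (⋃ i, ball (cx i) (ρx i) ×ˢ ball (cy i) (ρy i)) := by
  set O := ⋃ i, ball (cx i) (ρx i) ×ˢ ball (cy i) (ρy i) with hO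
  set E := ⋃ i, ball (cx i) (ρx i) ×ˢ ball (cy i) ((2+4*b) * (ρy i / 2)) with hE
  set V := ⋃ i, ball (cx i) (2*a*ρx i) ×ˢ ball (cy i) (2*b*ρy i) with hV
  have hOopen : IsOpen O := isOpen_iUnion fun i => isOpen_ball.prod isOpen_ball
  have hEopen : IsOpen E := isOpen_iUnion fun i => isOpen_ball.prod isOpen_ball
  have hVopen : IsOpen V := isOpen_iUnion fun i => isOpen_ball.prod isOpen_ball
  -- Step A : volume E ≤ (7+8b)^m volume O
  have stepA : volume E ≤ ENNReal.ofReal ((7+8*b)^m) * volume O := by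
    rw [MeasureTheory.Measure.volume_eq_prod, Measure.prod_apply hEopen.measurableSet,
      Measure.prod_apply hOopen.measurableSet]
    rw [← lintegral_const_mul' _ _ ENNReal.ofReal_ne_top]
    refine lintegral_mono fun x => ?_
    have hslE : Prod.mk x ⁻¹' E =
        ⋃ j : {i // x ∈ ball (cx i) (ρx i)}, ball (cy j.1) ((2+4*b) * (ρy j.1 / 2)) := by
      ext y
      simp only [hE, Set.mem_preimage, Set.mem_iUnion, Set.mem_prod]
      constructor
      · rintro ⟨i, hxi, hyi⟩; exact ⟨⟨i, hxi⟩, hyi⟩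
      · rintro ⟨⟨i, hxi⟩, hyi⟩; exact ⟨i, hxi, hyi⟩
    rw [hslE]
    have h2 : (7 + 8*b : ℝ) = 3 + 2*(2+4*b) := by ring
    rw [h2]
    refine cover_lemma (ι := {i // x ∈ ball (cx i) (ρx i)}) hm (fun j => cy j.1) (fun j => ρy j.1 / 2)
      (fun j => by linarith [hy j.1]) (Prod.mk x ⁻¹' O) ?_ (2+4*b) (by linarith)
    rintro ⟨i, hxi⟩ y hyi
    simp only [Set.mem_preimage, hO, Set.mem_iUnion, Set.mem_prod]
    refine ⟨i, hxi, ?_⟩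
    rw [mem_ball]
    calc dist y (cy i) ≤ ρy i / 2 := mem_closedBall.1 hyi
      _ < ρy i := by linarith [hy i]
  -- Step B : volume V ≤ (3+8a)^n volume E
  have stepB : volume V ≤ ENNReal.ofReal ((3+8*a)^n) * volume E := by
    rw [MeasureTheory.Measure.volume_eq_prod, Measure.prod_apply_symm hVopen.measurableSet,
      Measure.prod_apply_symm hEopen.measurableSet]
    rw [← lintegral_const_mul' _ _ ENNReal.ofReal_ne_top]
    refine lintegral_mono fun y => ?_
    have hslV : (fun x => (x, y)) ⁻¹' V =
        ⋃ j : {i // y ∈ ball (cy i) (2*b*ρy i)}, ball (cx j.1) ((4*a) * (ρx j.1 / 2)) := by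
      ext x
      simp only [hV, Set.mem_preimage, Set.mem_iUnion, Set.mem_prod]
      constructor
      · rintro ⟨i, hxi, hyi⟩
        exact ⟨⟨i, hyi⟩, by rw [show (4*a) * (ρx i / 2) = 2*a*ρx i by ring]; exact hxi⟩
      · rintro ⟨⟨i, hyi⟩, hxi⟩
        exact ⟨i, by rw [show 2*a*ρx i = (4*a) * (ρx i / 2) by ring]; exact hxi, hyi⟩
    rw [hslV]
    have h2 : (3 + 8*a : ℝ) = 3 + 2*(4*a) := by ring
    rw [h2]
    refine cover_lemma (ι := {i // y ∈ ball (cy i) (2*b*ρy i)}) hn (fun j => cx j.1) (fun j => ρx j.1 / 2)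
      (fun j => by linarith [hx j.1]) ((fun x => (x, y)) ⁻¹' E) ?_ (4*a) (by linarith)
    rintro ⟨i, hyi⟩ x hxi
    simp only [Set.mem_preimage, hE, Set.mem_iUnion, Set.mem_prod]
    refine ⟨i, ?_, ?_⟩
    · rw [mem_ball]
      calc dist x (cx i) ≤ ρx i / 2 := mem_closedBall.1 hxi
        _ < ρx i := by linarith [hx i]
    · rw [mem_ball]
      calc dist y (cy i) < 2*b*ρy i := mem_ball.1 hyi
        _ ≤ (2+4*b) * (ρy i / 2) := by nlinarith [hy i]
  calc volume V ≤ ENNReal.ofReal ((3+8*a)^n) * volume E := stepB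
    _ ≤ ENNReal.ofReal ((3+8*a)^n) * (ENNReal.ofReal ((7+8*b)^m) * volume O) := by gcongr
    _ = ENNReal.ofReal ((3+8*a)^n * (7+8*b)^m) * volume O := by
        rw [← mul_assoc, ← ENNReal.ofReal_mul (by positivity)]
    _ ≤ ENNReal.ofReal (8^n * (1+a)^n * (8^m * (1+b)^m)) * volume O := by
        refine mul_le_mul_left (ENNReal.ofReal_le_ofReal ?_) _
        have h1 : (3+8*a : ℝ)^n ≤ (8*(1+a))^n := by gcongr; linarith
        have h2 : (7+8*b : ℝ)^m ≤ (8*(1+b))^m := by gcongr; linarith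
        calc (3+8*a : ℝ)^n * (7+8*b)^m ≤ (8*(1+a))^n * (8*(1+b))^m := by
              apply mul_le_mul h1 h2 (by positivity) (by positivity)
          _ = 8^n * (1+a)^n * (8^m * (1+b)^m) := by rw [mul_pow, mul_pow]

lemma d_nonneg (p : ℝ) (hp : 0 < p) (k : ℤ) :
    0 ≤ (2:ℝ) ^ ((k:ℝ) * p) - (2:ℝ) ^ (((k:ℝ) - 1) * p) := by
  have : (2:ℝ) ^ (((k:ℝ) - 1) * p) ≤ (2:ℝ) ^ ((k:ℝ) * p) := by
    apply Real.rpow_le_rpow_left_iff (by norm_num : (1:ℝ) < 2) |>.2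
    nlinarith
  linarith

lemma ofReal_zpow_rpow (k : ℤ) (p : ℝ) (hp : 0 ≤ p) :
    (ENNReal.ofReal ((2:ℝ) ^ k)) ^ p = ENNReal.ofReal ((2:ℝ) ^ ((k:ℝ) * p)) := by
  rw [ENNReal.ofReal_rpow_of_nonneg (by positivity) hp]
  congr 1
  rw [← Real.rpow_intCast 2 k, ← Real.rpow_mul (by norm_num)]

lemma two_rpow_lt_one (p : ℝ) (hp : 0 < p) : (1:ℝ) < (2:ℝ) ^ p := by
  have := Real.rpow_lt_rpow_left_iff (x := (2:ℝ)) (by norm_num : (1:ℝ) < 2) |>.2 hp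
  simpa using this

section Pointwise

variable {n m : ℕ} (φ : ℝ → ℝ → Ed n × Ed m → ℝ) (f : Ed n × Ed m → ℝ)

lemma ptwise_upper {a b : ℝ} (ha : 1 ≤ a) (hb : 1 ≤ b) {p : ℝ} (hp : 0 < p)
    (q : Ed n × Ed m) :
    (MstarAp n m φ f a b q.1 q.2) ^ p ≤
      ∑' k : ℤ, (VkS φ f a b k).indicator
        (fun _ => ENNReal.ofReal ((2:ℝ) ^ p * (2:ℝ) ^ ((k:ℝ) * p))) q := by
  rcases eq_or_ne (MstarAp n m φ f a b q.1 q.2) 0 with h0 | h0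
  · rw [h0, ENNReal.zero_rpow_of_pos hp]; exact zero_le
  rcases eq_or_ne (MstarAp n m φ f a b q.1 q.2) ∞ with htop | htop
  · have hmem : ∀ k : ℤ, q ∈ VkS φ f a b k := fun k =>
      mem_Vk φ f ha hb (htop ▸ ENNReal.ofReal_lt_top)
    have h21 := two_rpow_lt_one p hp
    have hRHS : (∑' k : ℤ, (VkS φ f a b k).indicator
        (fun _ => ENNReal.ofReal ((2:ℝ) ^ p * (2:ℝ) ^ ((k:ℝ) * p))) q) = ∞ := by
      apply ENNReal.eq_top_of_forall_nnreal_le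
      intro r
      obtain ⟨N, hN⟩ := pow_unbounded_of_one_lt (r:ℝ) h21
      have e : ((2:ℝ)^p)^N = (2:ℝ)^((((N:ℤ)):ℝ)*p) := by
        rw [← Real.rpow_natCast ((2:ℝ)^p) N, ← Real.rpow_mul (by norm_num)]
        push_cast
        ring_nf
      have hterm : (r:ℝ) ≤ (2:ℝ)^p * (2:ℝ)^((((N:ℤ)):ℝ)*p) := by
        have := Real.rpow_pos_of_pos two_pos ((((N:ℤ)):ℝ)*p)
        nlinarith [hN, e]
      calc (r : ℝ≥0∞) = ENNReal.ofReal (r:ℝ) := (ENNReal.ofReal_coe_nnreal (p := r)).symm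
        _ ≤ ENNReal.ofReal ((2:ℝ)^p * (2:ℝ)^((((N:ℤ)):ℝ)*p)) := ENNReal.ofReal_le_ofReal hterm
        _ = (VkS φ f a b (N:ℤ)).indicator
              (fun _ => ENNReal.ofReal ((2:ℝ) ^ p * (2:ℝ) ^ (((((N:ℤ)):ℤ):ℝ) * p))) q := by
            rw [Set.indicator_of_mem (hmem (N:ℤ))]
        _ ≤ _ := ENNReal.le_tsum (N:ℤ)
    rw [hRHS]
    exact le_top
  · have hA0 : 0 < (MstarAp n m φ f a b q.1 q.2).toReal := ENNReal.toReal_pos h0 htop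
    obtain ⟨k, hk⟩ := exists_mem_Ioc_zpow hA0 one_lt_two
    have hq : q ∈ VkS φ f a b k := by
      refine mem_Vk φ f ha hb ?_
      rw [← ENNReal.ofReal_toReal htop]
      exact (ENNReal.ofReal_lt_ofReal_iff hA0).2 hk.1
    have hAle : MstarAp n m φ f a b q.1 q.2 ≤ ENNReal.ofReal ((2:ℝ)^(k+1)) := by
      rw [← ENNReal.ofReal_toReal htop]
      exact ENNReal.ofReal_le_ofReal hk.2
    calc (MstarAp n m φ f a b q.1 q.2) ^ p
        ≤ (ENNReal.ofReal ((2:ℝ)^(k+1))) ^ p := ENNReal.rpow_le_rpow hAle hp.le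
      _ = ENNReal.ofReal ((2:ℝ)^((((k+1):ℤ):ℝ)*p)) := ofReal_zpow_rpow (k+1) p hp.le
      _ = ENNReal.ofReal ((2:ℝ)^p * (2:ℝ)^((k:ℝ)*p)) := by
          rw [← Real.rpow_add two_pos]
          congr 1
          push_cast
          ring
      _ = (VkS φ f a b k).indicator
            (fun _ => ENNReal.ofReal ((2:ℝ) ^ p * (2:ℝ) ^ ((k:ℝ) * p))) q := by
          rw [Set.indicator_of_mem hq]
      _ ≤ _ := ENNReal.le_tsum k

lemma ptwise_lower {p : ℝ} (hp : 0 < p) (q : Ed n × Ed m) :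
    ∑' k : ℤ, (OkS φ f k).indicator
        (fun _ => ENNReal.ofReal ((2:ℝ) ^ ((k:ℝ) * p) - (2:ℝ) ^ (((k:ℝ) - 1) * p))) q ≤
      (MstarAp n m φ f 1 1 q.1 q.2) ^ p := by
  by_cases hub : ∀ K : ℤ, ∃ k : ℤ, q ∈ OkS φ f k ∧ K ≤ k
  · have hall : MstarAp n m φ f 1 1 q.1 q.2 = ∞ := by
      apply ENNReal.eq_top_of_forall_nnreal_le
      intro r
      obtain ⟨N, hN⟩ := pow_unbounded_of_one_lt (r:ℝ) (by norm_num : (1:ℝ) < 2)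
      obtain ⟨k, hk, hkN⟩ := hub (N:ℤ)
      have hqN : q ∈ OkS φ f (N:ℤ) := OkS_antitone φ f hkN hk
      calc (r:ℝ≥0∞) = ENNReal.ofReal (r:ℝ) := (ENNReal.ofReal_coe_nnreal (p := r)).symm
        _ ≤ ENNReal.ofReal ((2:ℝ)^((N:ℤ))) := by
            refine ENNReal.ofReal_le_ofReal ?_
            rw [zpow_natCast]
            exact hN.le
        _ ≤ _ := (mem_Ok_lt_Mstar φ f hqN).le
    rw [hall, ENNReal.top_rpow_of_pos hp]
    exact le_top
  · push_neg at hub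
    obtain ⟨K₀, hK₀⟩ := hub
    by_cases hne : ∃ k : ℤ, q ∈ OkS φ f k
    · obtain ⟨K, hKmem, hKgr⟩ := Int.exists_greatest_of_bdd
        (⟨K₀, fun z hz => (hK₀ z hz).le⟩ : ∃ b, ∀ z : ℤ, q ∈ OkS φ f z → z ≤ b) hne
      have hlam : ENNReal.ofReal ((2:ℝ)^K) ≤ MstarAp n m φ f 1 1 q.1 q.2 :=
        (mem_Ok_lt_Mstar φ f hKmem).le
      calc ∑' k : ℤ, (OkS φ f k).indicator
            (fun _ => ENNReal.ofReal ((2:ℝ) ^ ((k:ℝ) * p) - (2:ℝ) ^ (((k:ℝ) - 1) * p))) q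
          ≤ ENNReal.ofReal ((2:ℝ)^((K:ℝ)*p)) := by
            refine Summable.tsum_le_of_sum_le ENNReal.summable fun F => ?_
            classical
            have e1 : ∀ k ∈ F, (OkS φ f k).indicator
                (fun _ => ENNReal.ofReal ((2:ℝ) ^ ((k:ℝ) * p) - (2:ℝ) ^ (((k:ℝ) - 1) * p))) q =
                if q ∈ OkS φ f k then
                  ENNReal.ofReal ((2:ℝ) ^ ((k:ℝ) * p) - (2:ℝ) ^ (((k:ℝ) - 1) * p)) else 0 :=
              fun k _ => Set.indicator_apply _ _ _
            rw [Finset.sum_congr rfl e1, ← Finset.sum_filter, ← ENNReal.ofReal_sum_of_nonneg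
              (fun i _ => d_nonneg p hp i)]
            refine ENNReal.ofReal_le_ofReal ?_
            refine sum_d_le p hp _ K fun k hk => ?_
            exact hKgr k (Finset.mem_filter.1 hk).2
        _ ≤ (MstarAp n m φ f 1 1 q.1 q.2) ^ p := by
            rw [← ofReal_zpow_rpow K p hp.le]
            exact ENNReal.rpow_le_rpow hlam hp.le
    · push_neg at hne
      have h0 : ∀ k : ℤ, (OkS φ f k).indicator
          (fun _ => ENNReal.ofReal ((2:ℝ) ^ ((k:ℝ) * p) - (2:ℝ) ^ (((k:ℝ) - 1) * p))) q = 0 :=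
        fun k => Set.indicator_of_notMem (hne k) _
      rw [tsum_congr h0, tsum_zero]
      exact zero_le

end Pointwise

end AuxProof

/-- Aperture comparison for the flag non-tangential maximal function: for every
`0 < p < ∞` there is `C = C(n,m,p)` with
`∫ (M^*_{φ,a,b} f)^p ≤ C (1+a)^n (1+b)^m ∫ (M^*_φ f)^p` for all `a, b ≥ 1`. -/
theorem statement5 (n m : ℕ) (hn : 1 ≤ n) (hm : 1 ≤ m) (p : ℝ) (hp : 0 < p) :
    ∃ C : ℝ, 0 < C ∧
      ∀ (φ : ℝ → ℝ → Ed n × Ed m → ℝ),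
        (∀ t s, 0 < t → 0 < s → Integrable (φ t s) volume) →
        ∀ (f : Ed n × Ed m → ℝ), Integrable f volume →
        ∀ (a b : ℝ), 1 ≤ a → 1 ≤ b →
          (∫⁻ q : Ed n × Ed m, (MstarAp n m φ f a b q.1 q.2) ^ p) ≤
            ENNReal.ofReal (C * (1 + a) ^ n * (1 + b) ^ m) *
              ∫⁻ q : Ed n × Ed m, (Mstar n m φ f q.1 q.2) ^ p := by
  have h2p1 : (0:ℝ) < 1 - (2:ℝ)^(-p) := by
    have : (2:ℝ)^(-p) < 1 := Real.rpow_lt_one_of_one_lt_of_neg one_lt_two (by linarith)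
    linarith
  have h2pp : (0:ℝ) < (2:ℝ)^p := Real.rpow_pos_of_pos two_pos p
  set cp : ℝ := (2:ℝ)^p / (1 - (2:ℝ)^(-p)) with hcp
  have hcp0 : 0 < cp := div_pos h2pp h2p1
  refine ⟨cp * ((8:ℝ)^n * 8^m), by positivity, ?_⟩
  intro φ _ f _ a b ha hb
  simp only [Mstar]
  -- the covering estimate, level by level
  have hVol : ∀ k : ℤ, volume (VkS φ f a b k) ≤
      ENNReal.ofReal (8^n * (1+a)^n * (8^m * (1+b)^m)) * volume (OkS φ f k) := by
    intro k
    unfold VkS OkS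
    exact prod_cover hn hm (ι := ↥(Wset φ f k)) (fun w => w.1.1.1) (fun w => w.1.1.2)
      (fun w => w.1.2.1) (fun w => w.1.2.1 + w.1.2.2) (fun w => w.2.1)
      (fun w => show (0:ℝ) < w.1.2.1 + w.1.2.2 by have h1 := w.2.1; have h2 := w.2.2.1; linarith) a b ha hb
  -- the constant identity, level by level
  have hid : ∀ k : ℤ, ENNReal.ofReal ((2:ℝ)^p * (2:ℝ)^((k:ℝ)*p)) =
      ENNReal.ofReal cp * ENNReal.ofReal ((2:ℝ)^((k:ℝ)*p) - (2:ℝ)^(((k:ℝ)-1)*p)) := by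
    intro k
    rw [← ENNReal.ofReal_mul hcp0.le]
    congr 1
    have e : (2:ℝ)^(((k:ℝ)-1)*p) = (2:ℝ)^((k:ℝ)*p) * (2:ℝ)^(-p) := by
      rw [← Real.rpow_add two_pos]; congr 1; ring
    rw [hcp, e]
    field_simp
  calc ∫⁻ q : Ed n × Ed m, (MstarAp n m φ f a b q.1 q.2) ^ p
      ≤ ∫⁻ q : Ed n × Ed m, ∑' k : ℤ, (VkS φ f a b k).indicator
          (fun _ => ENNReal.ofReal ((2:ℝ) ^ p * (2:ℝ) ^ ((k:ℝ) * p))) q :=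
        lintegral_mono (ptwise_upper φ f ha hb hp)
    _ = ∑' k : ℤ, ENNReal.ofReal ((2:ℝ) ^ p * (2:ℝ) ^ ((k:ℝ) * p)) * volume (VkS φ f a b k) := by
        rw [lintegral_tsum (fun k =>
          (measurable_const.indicator (VkS_open φ f a b k).measurableSet).aemeasurable)]
        exact tsum_congr fun k =>
          lintegral_indicator_const (VkS_open φ f a b k).measurableSet _
    _ ≤ ∑' k : ℤ, (ENNReal.ofReal cp * ENNReal.ofReal (8^n * (1+a)^n * (8^m * (1+b)^m))) *
          (ENNReal.ofReal ((2:ℝ)^((k:ℝ)*p) - (2:ℝ)^(((k:ℝ)-1)*p)) * volume (OkS φ f k)) := by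
        refine ENNReal.tsum_le_tsum fun k => ?_
        rw [hid k]
        calc ENNReal.ofReal cp * ENNReal.ofReal ((2:ℝ)^((k:ℝ)*p) - (2:ℝ)^(((k:ℝ)-1)*p)) *
              volume (VkS φ f a b k)
            ≤ ENNReal.ofReal cp * ENNReal.ofReal ((2:ℝ)^((k:ℝ)*p) - (2:ℝ)^(((k:ℝ)-1)*p)) *
              (ENNReal.ofReal (8^n * (1+a)^n * (8^m * (1+b)^m)) * volume (OkS φ f k)) := by
              gcongr
              exact hVol k
          _ = (ENNReal.ofReal cp * ENNReal.ofReal (8^n * (1+a)^n * (8^m * (1+b)^m))) *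
              (ENNReal.ofReal ((2:ℝ)^((k:ℝ)*p) - (2:ℝ)^(((k:ℝ)-1)*p)) * volume (OkS φ f k)) := by
              ring
    _ = (ENNReal.ofReal cp * ENNReal.ofReal (8^n * (1+a)^n * (8^m * (1+b)^m))) *
          ∑' k : ℤ, ENNReal.ofReal ((2:ℝ)^((k:ℝ)*p) - (2:ℝ)^(((k:ℝ)-1)*p)) * volume (OkS φ f k) :=
        ENNReal.tsum_mul_left
    _ = (ENNReal.ofReal cp * ENNReal.ofReal (8^n * (1+a)^n * (8^m * (1+b)^m))) *
          ∫⁻ q : Ed n × Ed m, ∑' k : ℤ, (OkS φ f k).indicator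
            (fun _ => ENNReal.ofReal ((2:ℝ) ^ ((k:ℝ) * p) - (2:ℝ) ^ (((k:ℝ) - 1) * p))) q := by
        congr 1
        rw [lintegral_tsum (fun k =>
          (measurable_const.indicator (OkS_open φ f k).measurableSet).aemeasurable)]
        exact tsum_congr fun k =>
          (lintegral_indicator_const (OkS_open φ f k).measurableSet _).symm
    _ ≤ (ENNReal.ofReal cp * ENNReal.ofReal (8^n * (1+a)^n * (8^m * (1+b)^m))) *
          ∫⁻ q : Ed n × Ed m, (MstarAp n m φ f 1 1 q.1 q.2) ^ p :=
        mul_le_mul_right (lintegral_mono (ptwise_lower φ f hp)) _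
    _ = ENNReal.ofReal (cp * ((8:ℝ)^n * 8^m) * (1 + a) ^ n * (1 + b) ^ m) *
          ∫⁻ q : Ed n × Ed m, (MstarAp n m φ f 1 1 q.1 q.2) ^ p := by
        congr 1
        rw [← ENNReal.ofReal_mul hcp0.le]
        congr 1
        ring
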